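/- Fourier slice theorem for the polar Radon transform: for f ∈ L¹(ℝ²), defining R^pol f(θ,t) = ∫_ℝ f(t cos θ − y sin θ, t sin θ + y cos θ) dy, the one-dimensional Fourier transform in the variable t satisfies (I⊗F)(R^pol f)(θ,τ) = F f(τ w(θ)) for all (θ,τ) ∈ [0,π) × ℝ, where w(θ) = (cos θ, sin θ) and F is the 2D Fourier transform. -/

import Mathlib

open MeasureTheory Set

/-- Rotation by angle `θ` on `ℝ × ℝ`, as a measurable equivalence. -/
noncomputable def rotEquiv (θ : ℝ) : (ℝ × ℝ) ≃ᵐ (ℝ × ℝ) :=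
  Complex.measurableEquivRealProd.symm.trans
    (((rotation (Circle.exp θ)).toHomeomorph.toMeasurableEquiv).trans
      Complex.measurableEquivRealProd)

lemma rotEquiv_apply (θ : ℝ) (p : ℝ × ℝ) :
    rotEquiv θ p = (p.1 * Real.cos θ - p.2 * Real.sin θ,
      p.1 * Real.sin θ + p.2 * Real.cos θ) := by
  simp only [rotEquiv, MeasurableEquiv.trans_apply, Homeomorph.toMeasurableEquiv_coe,
    LinearIsometryEquiv.coe_toHomeomorph, rotation_apply, Circle.coe_exp,
    Complex.measurableEquivRealProd_apply, Complex.measurableEquivRealProd_symm_apply]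
  rw [Complex.exp_mul_I]
  apply Prod.ext <;>
    simp [Complex.add_re, Complex.add_im, Complex.mul_re, Complex.mul_im,
      Complex.cos_ofReal_re, Complex.sin_ofReal_re] <;> ring

lemma rotEquiv_measurePreserving (θ : ℝ) :
    MeasurePreserving (rotEquiv θ) := by
  exact Complex.volume_preserving_equiv_real_prod.comp
    (((rotation (Circle.exp θ)).measurePreserving).comp
      Complex.volume_preserving_equiv_real_prod.symm)

/-- The polar Radon transform. -/
noncomputable def Rpol (f : ℝ × ℝ → ℂ) (θ t : ℝ) : ℂ :=
  ∫ y : ℝ, f (t * Real.cos θ - y * Real.sin θ, t * Real.sin θ + y * Real.cos θ)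

/-- The 2D Fourier transform `F f(ξ) = ∫ f(x) e^{-2πi ξ·x} dx`. -/
noncomputable def FT2 (f : ℝ × ℝ → ℂ) (ξ : ℝ × ℝ) : ℂ :=
  ∫ x : ℝ × ℝ, f x * Complex.exp (((-2) * Real.pi * (ξ.1 * x.1 + ξ.2 * x.2) : ℝ) * Complex.I)

/-- Fourier slice theorem for the polar Radon transform: for `f ∈ L¹(ℝ²)`, the
one-dimensional Fourier transform in the variable `t` of `R^pol f` satisfies
`(I⊗F)(R^pol f)(θ,τ) = F f(τ w(θ))` for all `(θ,τ) ∈ [0,π) × ℝ`, `w(θ) = (cos θ, sin θ)`. -/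
theorem fourier_slice_polar (f : ℝ × ℝ → ℂ) (hf : Integrable f)
    (θ : ℝ) (hθ : θ ∈ Ico 0 Real.pi) (τ : ℝ) :
    ∫ t : ℝ, Rpol f θ t * Complex.exp (((-2) * Real.pi * (τ * t) : ℝ) * Complex.I)
      = FT2 f (τ * Real.cos θ, τ * Real.sin θ) := by
  set G : ℝ × ℝ → ℂ := fun x => f x *
    Complex.exp (((-2) * Real.pi * ((τ * Real.cos θ) * x.1 + (τ * Real.sin θ) * x.2) : ℝ)
      * Complex.I) with hGdef
  have hcont : Continuous fun x : ℝ × ℝ =>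
      Complex.exp (((-2) * Real.pi * ((τ * Real.cos θ) * x.1 + (τ * Real.sin θ) * x.2) : ℝ)
        * Complex.I) := by
    apply Complex.continuous_exp.comp
    exact (Complex.continuous_ofReal.comp (by continuity)).mul continuous_const
  have hG : Integrable G := by
    have : Integrable (fun x : ℝ × ℝ =>
        Complex.exp (((-2) * Real.pi * ((τ * Real.cos θ) * x.1 + (τ * Real.sin θ) * x.2) : ℝ)
          * Complex.I) * f x) := by
      refine Integrable.bdd_mul hf hcont.aestronglyMeasurable (c := 1) (Filter.Eventually.of_forall fun x => ?_)
      rw [Complex.norm_exp_ofReal_mul_I]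
    simpa [hGdef, mul_comm] using this
  have hR := rotEquiv_measurePreserving θ
  have hRemb := (rotEquiv θ).measurableEmbedding
  have key : ∀ t y : ℝ,
      f (t * Real.cos θ - y * Real.sin θ, t * Real.sin θ + y * Real.cos θ) *
        Complex.exp (((-2) * Real.pi * (τ * t) : ℝ) * Complex.I)
        = G (rotEquiv θ (t, y)) := by
    intro t y
    have harg : (-2) * Real.pi * ((τ * Real.cos θ) * (t * Real.cos θ - y * Real.sin θ)
        + (τ * Real.sin θ) * (t * Real.sin θ + y * Real.cos θ)) = (-2) * Real.pi * (τ * t) := by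
      have h1 : Real.sin θ ^ 2 + Real.cos θ ^ 2 = 1 := Real.sin_sq_add_cos_sq θ
      linear_combination ((-2) * Real.pi * (τ * t)) * h1
    rw [rotEquiv_apply]
    simp only [hGdef]
    rw [harg]
  calc ∫ t : ℝ, Rpol f θ t * Complex.exp (((-2) * Real.pi * (τ * t) : ℝ) * Complex.I)
      = ∫ t : ℝ, ∫ y : ℝ, G (rotEquiv θ (t, y)) := by
        refine integral_congr_ae (Filter.Eventually.of_forall fun t => ?_)
        simp only
        rw [show Rpol f θ t = ∫ y : ℝ, f (t * Real.cos θ - y * Real.sin θ, t * Real.sin θ + y * Real.cos θ) from rfl, ← integral_mul_const]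
        exact integral_congr_ae (Filter.Eventually.of_forall fun y => key t y)
    _ = ∫ p : ℝ × ℝ, G (rotEquiv θ p) := by
        exact integral_integral ((hR.integrable_comp_emb hRemb).2 hG)
    _ = ∫ x : ℝ × ℝ, G x := hR.integral_comp hRemb G
    _ = FT2 f (τ * Real.cos θ, τ * Real.sin θ) := rfl
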